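/- For each fixed nonnegative integer u, the function Ψ₂(q₁, ..., qₙ) = ∏_{k=1}^n (1 - q_k^{u+1}) is Schur-concave on (0, 1)^n. -/

import Mathlib

open Finset

/-- `x` majorizes `y`. -/
def Majorizes {n : ℕ} (x y : Fin n → ℝ) : Prop :=
  (∀ s : Finset (Fin n), ∃ t : Finset (Fin n),
      t.card = s.card ∧ ∑ i ∈ s, y i ≤ ∑ i ∈ t, x i) ∧
  ∑ i, x i = ∑ i, y i

noncomputable def phiAux (u : ℕ) (b : ℝ) : ℝ := ((u : ℝ) + 1) * b ^ u / (1 - b ^ (u + 1))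

lemma pow_tangent (u : ℕ) {a b : ℝ} (ha : 0 ≤ a) (hb : 0 < b) :
    b ^ (u+1) + (u+1) * b ^ u * (a - b) ≤ a ^ (u+1) := by
  have hx : (-2 : ℝ) ≤ a / b - 1 := by
    have : 0 ≤ a / b := div_nonneg ha hb.le
    linarith
  have h := one_add_mul_le_pow hx (u+1)
  have h1 : (1 : ℝ) + (a / b - 1) = a / b := by ring
  rw [h1] at h
  have h2 := mul_le_mul_of_nonneg_right h (le_of_lt (pow_pos hb (u+1)))
  have h3 : (a / b) ^ (u+1) * b ^ (u+1) = a ^ (u+1) := by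
    rw [div_pow, div_mul_cancel₀]
    exact pow_ne_zero _ hb.ne'
  have h4 : (1 + (↑(u+1):ℝ) * (a / b - 1)) * b ^ (u+1)
      = b ^ (u+1) + (u+1) * b ^ u * (a - b) := by
    field_simp
    push_cast
    ring
  rw [h3, h4] at h2
  linarith

lemma log_tangent (u : ℕ) {a b : ℝ} (ha : a ∈ Set.Ioo (0:ℝ) 1) (hb : b ∈ Set.Ioo (0:ℝ) 1) :
    Real.log (1 - a ^ (u+1)) ≤ Real.log (1 - b ^ (u+1)) + phiAux u b * (b - a) := by
  have hA : (0:ℝ) < 1 - a ^ (u+1) := by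
    have := pow_lt_one₀ ha.1.le ha.2 (by omega : u+1 ≠ 0); linarith
  have hB : (0:ℝ) < 1 - b ^ (u+1) := by
    have := pow_lt_one₀ hb.1.le hb.2 (by omega : u+1 ≠ 0); linarith
  have key : Real.log (1 - a ^ (u+1)) - Real.log (1 - b ^ (u+1))
      ≤ ((1 - a ^ (u+1)) - (1 - b ^ (u+1))) / (1 - b ^ (u+1)) := by
    rw [← Real.log_div hA.ne' hB.ne']
    have := Real.log_le_sub_one_of_pos (div_pos hA hB)
    have h : (1 - a ^ (u+1)) / (1 - b ^ (u+1)) - 1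
        = ((1 - a ^ (u+1)) - (1 - b ^ (u+1))) / (1 - b ^ (u+1)) := by
      field_simp
    linarith [h ▸ this]
  have hnum : (1 - a ^ (u+1)) - (1 - b ^ (u+1)) ≤ ((u:ℝ)+1) * b ^ u * (b - a) := by
    have := pow_tangent u ha.1.le hb.1
    push_cast at this
    nlinarith [this]
  have hdiv : ((1 - a ^ (u+1)) - (1 - b ^ (u+1))) / (1 - b ^ (u+1))
      ≤ (((u:ℝ)+1) * b ^ u * (b - a)) / (1 - b ^ (u+1)) :=
    div_le_div_of_nonneg_right hnum hB.le
  have heq : (((u:ℝ)+1) * b ^ u * (b - a)) / (1 - b ^ (u+1))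
      = phiAux u b * (b - a) := by
    unfold phiAux; ring
  linarith [heq ▸ hdiv, key]

lemma phi_mono (u : ℕ) {b1 b2 : ℝ} (h1 : b1 ∈ Set.Ioo (0:ℝ) 1) (h2 : b2 ∈ Set.Ioo (0:ℝ) 1)
    (h : b1 ≤ b2) : phiAux u b1 ≤ phiAux u b2 := by
  have hB1 : (0:ℝ) < 1 - b1 ^ (u+1) := by
    have := pow_lt_one₀ h1.1.le h1.2 (by omega : u+1 ≠ 0); linarith
  have hB2 : (0:ℝ) < 1 - b2 ^ (u+1) := by
    have := pow_lt_one₀ h2.1.le h2.2 (by omega : u+1 ≠ 0); linarith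
  unfold phiAux
  apply div_le_div₀ (mul_nonneg (by positivity) (pow_nonneg h2.1.le u)) _ hB2 _
  · exact mul_le_mul_of_nonneg_left (pow_le_pow_left₀ h1.1.le h u) (by positivity)
  · have := pow_le_pow_left₀ h1.1.le h (u+1); linarith

lemma abel_aux (c e : ℕ → ℝ) :
    ∀ n : ℕ, 1 ≤ n → (∀ i j, i ≤ j → j < n → c j ≤ c i) →
    (∀ k, k ≤ n → 0 ≤ ∑ i ∈ range k, e i) →
    c (n-1) * (∑ i ∈ range n, e i) ≤ ∑ i ∈ range n, c i * e i := by
  intro n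
  induction n with
  | zero => omega
  | succ m ih =>
    intro _ hc hD
    rcases Nat.eq_zero_or_pos m with hm | hm
    · subst hm; simp
    · have ih' := ih hm (fun i j hij hj => hc i j hij (by omega))
        (fun k hk => hD k (by omega))
      have hstep : ∑ i ∈ range (m+1), c i * e i
          = (∑ i ∈ range m, c i * e i) + c m * e m := by
        rw [Finset.sum_range_succ]
      have hsum : ∑ i ∈ range (m+1), e i = (∑ i ∈ range m, e i) + e m := by
        rw [Finset.sum_range_succ]
      have hcm : c m ≤ c (m-1) := hc (m-1) m (by omega) (by omega)
      have hDm : 0 ≤ ∑ i ∈ range m, e i := hD m (by omega)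
      have : c m * (∑ i ∈ range m, e i) ≤ c (m-1) * (∑ i ∈ range m, e i) :=
        mul_le_mul_of_nonneg_right hcm hDm
      have hms : m + 1 - 1 = m := by omega
      rw [hms, hstep, hsum]
      nlinarith [ih']

lemma strictMono_fin_le {k : ℕ} (f : Fin k → ℕ) (hf : StrictMono f) (j : Fin k) :
    (j : ℕ) ≤ f j := by
  obtain ⟨m, hm⟩ := j
  induction m with
  | zero => simp
  | succ i ih =>
    have hi : i < k := by omega
    have h1 : f ⟨i, hi⟩ < f ⟨i+1, hm⟩ := hf (by simp [Fin.mk_lt_mk])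
    have h2 := ih hi
    simp only [Fin.val_mk] at h2 ⊢
    omega

lemma sum_subset_le {n : ℕ} (X : Fin n → ℝ) (hX : ∀ i j : Fin n, i ≤ j → X j ≤ X i)
    (t : Finset (Fin n)) :
    ∑ i ∈ t, X i ≤ ∑ j ∈ range t.card, (if h : j < n then X ⟨j, h⟩ else 0) := by
  classical
  have hk : t.card ≤ n := by
    simpa using Finset.card_le_univ t
  set k := t.card with hkdef
  let e : Fin k ≃o t := t.orderIsoOfFin rfl
  have hmono : StrictMono (fun j : Fin k => ((e j : Fin n) : ℕ)) := by
    intro j1 j2 hlt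
    have := e.strictMono hlt
    exact Fin.lt_iff_val_lt_val.mp (Subtype.coe_lt_coe.mpr this)
  have h1 : ∑ i ∈ t, X i = ∑ j : Fin k, X (e j) := by
    rw [← Finset.sum_coe_sort t X]
    exact (Equiv.sum_comp e.toEquiv (fun i : t => X i)).symm
  rw [h1, ← Fin.sum_univ_eq_sum_range (fun j => if h : j < n then X ⟨j, h⟩ else 0) k]
  apply Finset.sum_le_sum
  intro j _
  have hj : (j : ℕ) < n := lt_of_lt_of_le j.2 hk
  rw [dif_pos hj]
  refine hX ⟨j, hj⟩ (e j) ?_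
  rw [Fin.le_iff_val_le_val]
  simpa using strictMono_fin_le _ hmono j

theorem geometric_max_cdf_schur_concave (n u : ℕ) (q q' : Fin n → ℝ)
    (hq : ∀ i, q i ∈ Set.Ioo (0 : ℝ) 1) (hq' : ∀ i, q' i ∈ Set.Ioo (0 : ℝ) 1)
    (hmaj : Majorizes q q') :
    ∏ k, (1 - q k ^ (u + 1)) ≤ ∏ k, (1 - q' k ^ (u + 1)) := by
  classical
  rcases Nat.eq_zero_or_pos n with hn0 | hn
  · subst hn0; simp
  set σ : Equiv.Perm (Fin n) := Tuple.sort (fun i => -q i) with hσ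
  set τ : Equiv.Perm (Fin n) := Tuple.sort (fun i => -q' i) with hτ
  set X : Fin n → ℝ := fun i => q (σ i) with hXdef
  set Y : Fin n → ℝ := fun i => q' (τ i) with hYdef
  have hXIoo : ∀ i, X i ∈ Set.Ioo (0:ℝ) 1 := fun i => hq (σ i)
  have hYIoo : ∀ i, Y i ∈ Set.Ioo (0:ℝ) 1 := fun i => hq' (τ i)
  have hXanti : ∀ i j : Fin n, i ≤ j → X j ≤ X i := by
    intro i j hij
    have := Tuple.monotone_sort (fun i => -q i) hij
    simpa [hXdef] using this
  have hYanti : ∀ i j : Fin n, i ≤ j → Y j ≤ Y i := by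
    intro i j hij
    have := Tuple.monotone_sort (fun i => -q' i) hij
    simpa [hYdef] using this
  set Xn : ℕ → ℝ := fun j => if h : j < n then X ⟨j, h⟩ else 0 with hXn
  set Yn : ℕ → ℝ := fun j => if h : j < n then Y ⟨j, h⟩ else 0 with hYn
  -- total sums
  have hXsum : ∑ j ∈ range n, Xn j = ∑ i, q i := by
    rw [← Fin.sum_univ_eq_sum_range Xn n]
    rw [← Equiv.sum_comp σ q]
    apply Finset.sum_congr rfl
    intro i _
    simp [hXn, hXdef, i.2]
  have hYsum : ∑ j ∈ range n, Yn j = ∑ i, q' i := by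
    rw [← Fin.sum_univ_eq_sum_range Yn n]
    rw [← Equiv.sum_comp τ q']
    apply Finset.sum_congr rfl
    intro i _
    simp [hYn, hYdef, i.2]
  -- partial sums
  have hpartial : ∀ k, k ≤ n → ∑ j ∈ range k, Yn j ≤ ∑ j ∈ range k, Xn j := by
    intro k hk
    -- the set of the k largest entries of q'
    set s : Finset (Fin n) :=
      Finset.image (fun j : Fin k => τ ⟨j, lt_of_lt_of_le j.2 hk⟩) Finset.univ with hs
    have hinj : Function.Injective (fun j : Fin k => τ ⟨j, lt_of_lt_of_le j.2 hk⟩) := by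
      intro a b hab
      have h2 := congrArg (Fin.val : Fin n → ℕ) (τ.injective hab)
      simp only [Fin.val_mk] at h2
      exact Fin.ext h2
    have hscard : s.card = k := by
      rw [hs, Finset.card_image_of_injective _ hinj, Finset.card_univ, Fintype.card_fin]
    have hssum : ∑ i ∈ s, q' i = ∑ j ∈ range k, Yn j := by
      rw [hs, Finset.sum_image (fun a _ b _ h => hinj h)]
      rw [← Fin.sum_univ_eq_sum_range Yn k]
      apply Finset.sum_congr rfl
      intro j _
      have hj : (j:ℕ) < n := lt_of_lt_of_le j.2 hk
      simp only [hYn, hYdef, dif_pos hj]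
    obtain ⟨t, htcard, hts⟩ := hmaj.1 s
    have h2 : ∑ i ∈ t, q i ≤ ∑ j ∈ range k, Xn j := by
      have himg : ∑ i ∈ t.image σ.symm, X i = ∑ i ∈ t, q i := by
        rw [Finset.sum_image (fun a _ b _ h => σ.symm.injective h)]
        apply Finset.sum_congr rfl
        intro i _
        simp [hXdef]
      have hcard2 : (t.image σ.symm).card = k := by
        rw [Finset.card_image_of_injective _ σ.symm.injective, htcard, hscard]
      have := sum_subset_le X hXanti (t.image σ.symm)
      rw [himg, hcard2] at this
      exact this
    calc ∑ j ∈ range k, Yn j = ∑ i ∈ s, q' i := hssum.symm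
      _ ≤ ∑ i ∈ t, q i := hts
      _ ≤ ∑ j ∈ range k, Xn j := h2
  -- Abel summation
  set c : ℕ → ℝ := fun j => phiAux u (Yn j) with hc
  set e : ℕ → ℝ := fun j => Xn j - Yn j with he
  have hYnIoo : ∀ j, j < n → Yn j ∈ Set.Ioo (0:ℝ) 1 := by
    intro j hj; simp only [hYn, dif_pos hj]; exact hYIoo _
  have habel : 0 ≤ ∑ j ∈ range n, c j * e j := by
    have hcanti : ∀ i j, i ≤ j → j < n → c j ≤ c i := by
      intro i j hij hj
      have hi : i < n := lt_of_le_of_lt hij hj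
      apply phi_mono u (hYnIoo j hj) (hYnIoo i hi)
      simp only [hYn, dif_pos hj, dif_pos hi]
      exact hYanti _ _ (by exact Fin.mk_le_mk.mpr hij)
    have hD : ∀ k, k ≤ n → 0 ≤ ∑ i ∈ range k, e i := by
      intro k hk
      have := hpartial k hk
      simp only [he, Finset.sum_sub_distrib]
      linarith
    have hDn : ∑ i ∈ range n, e i = 0 := by
      simp only [he, Finset.sum_sub_distrib, hXsum, hYsum, hmaj.2, sub_self]
    have := abel_aux c e n hn hcanti hD
    rw [hDn, mul_zero] at this
    exact this
  -- sum of logs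
  have hlog : ∑ i, Real.log (1 - X i ^ (u+1)) ≤ ∑ i, Real.log (1 - Y i ^ (u+1)) := by
    have h1 : ∑ i, Real.log (1 - X i ^ (u+1))
        ≤ ∑ i, (Real.log (1 - Y i ^ (u+1)) + phiAux u (Y i) * (Y i - X i)) :=
      Finset.sum_le_sum fun i _ => log_tangent u (hXIoo i) (hYIoo i)
    have h2 : ∑ i, (Real.log (1 - Y i ^ (u+1)) + phiAux u (Y i) * (Y i - X i))
        = ∑ i, Real.log (1 - Y i ^ (u+1)) + ∑ i, phiAux u (Y i) * (Y i - X i) := by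
      rw [Finset.sum_add_distrib]
    have h3 : ∑ i, phiAux u (Y i) * (Y i - X i) = - ∑ j ∈ range n, c j * e j := by
      rw [← Finset.sum_neg_distrib, ← Fin.sum_univ_eq_sum_range (fun j => -(c j * e j)) n]
      apply Finset.sum_congr rfl
      intro i _
      simp only [hc, he, hXn, hYn, dif_pos i.2]
      simp only [Fin.eta]
      ring
    have h4 : ∑ i, phiAux u (Y i) * (Y i - X i) ≤ 0 := by
      rw [h3]; linarith
    linarith
  -- exponentiate
  have hposX : ∀ i : Fin n, (0:ℝ) < 1 - X i ^ (u+1) := by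
    intro i
    have := pow_lt_one₀ (hXIoo i).1.le (hXIoo i).2 (by omega : u+1 ≠ 0); linarith
  have hposY : ∀ i : Fin n, (0:ℝ) < 1 - Y i ^ (u+1) := by
    intro i
    have := pow_lt_one₀ (hYIoo i).1.le (hYIoo i).2 (by omega : u+1 ≠ 0); linarith
  have hprodX : ∏ k, (1 - q k ^ (u + 1)) = Real.exp (∑ i, Real.log (1 - X i ^ (u+1))) := by
    rw [Real.exp_sum]
    rw [← Equiv.prod_comp σ (fun k => (1 - q k ^ (u+1)))]
    apply Finset.prod_congr rfl
    intro i _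
    rw [Real.exp_log (hposX i)]
  have hprodY : ∏ k, (1 - q' k ^ (u + 1)) = Real.exp (∑ i, Real.log (1 - Y i ^ (u+1))) := by
    rw [Real.exp_sum]
    rw [← Equiv.prod_comp τ (fun k => (1 - q' k ^ (u+1)))]
    apply Finset.prod_congr rfl
    intro i _
    rw [Real.exp_log (hposY i)]
  rw [hprodX, hprodY]
  exact Real.exp_le_exp.mpr hlog
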